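/- Let n ≥ 1, let M be an additive subgroup of ℝⁿ that is dense in ℝⁿ and contains u = (1,1,…,1), and set M⁺ = { g ∈ M : every coordinate of g is strictly positive } ∪ {0}. Let φ : M → ℝ be an additive map with φ(g) ≥ 0 for all g ∈ M⁺ and φ(u) = 1. Then φ is continuous on M with respect to the topology induced by the Euclidean norm of ℝⁿ. -/

import Mathlib

lemma coord_le_norm {n : ℕ} (g : EuclideanSpace ℝ (Fin n)) (i : Fin n) :
    |g i| ≤ ‖g‖ := by
  rw [EuclideanSpace.norm_eq]
  calc |g i| = Real.sqrt (‖g i‖ ^ 2) := by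
        rw [Real.sqrt_sq_eq_abs]; simp [abs_abs]
    _ ≤ _ := by
        apply Real.sqrt_le_sqrt
        exact Finset.single_le_sum (f := fun j => ‖g j‖ ^ 2)
          (fun j _ => by positivity) (Finset.mem_univ i)

/-- The positive cone of an additive subgroup `M` of `ℝⁿ`:
elements of `M` all of whose coordinates are strictly positive, together with `0`. -/
def Mplus (n : ℕ) (M : AddSubgroup (EuclideanSpace ℝ (Fin n))) :
    Set (EuclideanSpace ℝ (Fin n)) :=
  {g | g ∈ M ∧ ∀ i, 0 < g i} ∪ {0}

theorem stmt14 (n : ℕ) (hn : 1 ≤ n) (M : AddSubgroup (EuclideanSpace ℝ (Fin n)))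
    (hdense : Dense (M : Set (EuclideanSpace ℝ (Fin n))))
    (hu : ((WithLp.toLp 2 (fun _ => 1) : EuclideanSpace ℝ (Fin n))) ∈ M)
    (φ : M →+ ℝ)
    (hpos : ∀ g : M, (g : EuclideanSpace ℝ (Fin n)) ∈ Mplus n M → 0 ≤ φ g)
    (hunit : φ ⟨(WithLp.toLp 2 (fun _ => 1)), hu⟩ = 1) :
    Continuous φ := by
  apply continuous_of_continuousAt_zero φ
  rw [Metric.continuousAt_iff]
  intro ε hε
  obtain ⟨k, hk⟩ := exists_nat_gt (1 / ε)
  have hk0 : 0 < (k : ℝ) := lt_of_le_of_lt (by positivity) hk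
  have hkinv : 1 / (k : ℝ) < ε := by
    rw [div_lt_iff₀ hk0, mul_comm]
    exact (div_lt_iff₀ hε).mp hk
  refine ⟨1 / (k : ℝ), by positivity, ?_⟩
  intro g hg
  have hgnorm : ‖(g : EuclideanSpace ℝ (Fin n))‖ < 1 / k := by
    simpa [dist_eq_norm] using hg
  -- key: |φ g| ≤ 1/k
  set u : M := ⟨(WithLp.toLp 2 (fun _ => 1)), hu⟩ with hudef
  have key : ∀ h : M, (∀ i, (h : EuclideanSpace ℝ (Fin n)) i < 1 / k) → (k : ℝ) * φ h ≤ 1 := by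
    intro h hh
    have hmem : ((u - k • h : M) : EuclideanSpace ℝ (Fin n)) ∈ Mplus n M := by
      left
      refine ⟨(u - k • h : M).2, fun i => ?_⟩
      have : ((u - k • h : M) : EuclideanSpace ℝ (Fin n)) i = 1 - (k : ℝ) * (h : EuclideanSpace ℝ (Fin n)) i := by
        push_cast
        simp [hudef, PiLp.sub_apply, PiLp.smul_apply]
      rw [this]
      have h2 := (lt_div_iff₀ hk0).mp (hh i)
      linarith
    have := hpos _ hmem
    have heq : φ (u - k • h) = 1 - (k : ℝ) * φ h := by
      rw [map_sub, map_nsmul, hunit]; push_cast; ring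
    linarith [heq ▸ this]
  have h1 : (k : ℝ) * φ g ≤ 1 := by
    apply key
    intro i
    exact lt_of_le_of_lt (le_abs_self _) (lt_of_le_of_lt (coord_le_norm _ i) hgnorm)
  have h2 : (k : ℝ) * φ (-g) ≤ 1 := by
    apply key
    intro i
    have : ((-g : M) : EuclideanSpace ℝ (Fin n)) i = -((g : EuclideanSpace ℝ (Fin n)) i) := by
      simp
    rw [this]
    exact lt_of_le_of_lt (neg_le_abs _) (lt_of_le_of_lt (coord_le_norm _ i) hgnorm)
  rw [map_neg] at h2
  have : |φ g| ≤ 1 / k := by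
    rw [abs_le]
    have e1 := (le_div_iff₀' hk0).mpr h1
    have e2 := (le_div_iff₀' hk0).mpr h2
    constructor <;> linarith
  calc dist (φ g) (φ 0) = |φ g| := by simp
    _ ≤ 1 / k := this
    _ < ε := hkinv
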